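/- The 3×3 diagonal matrix ρ = diag(3/2, 3/4, 3/4), which is a density for the normalized trace τ = Tr/3 on M₃(ℂ), satisfies D(1‖ρ) < D(ρ‖1), where D(a‖b) := τ(a·log a − a·log b); explicitly, (1/3)·log(32/27) < (1/2)·log(9/8). Consequently τ((ρ − 1)·log ρ) = D(ρ‖1) + D(1‖ρ) < 2·D(ρ‖1). -/

import Mathlib

open scoped ComplexOrder

noncomputable def depolA : ℝ := 4/3 * Real.log 2
noncomputable def depolB : ℝ := Real.log 3 - 3 * Real.log 2

private lemma depol_key : 19 * Real.log 2 < 12 * Real.log 3 := by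
  have h := Real.log_lt_log (by positivity : (0:ℝ) < 2^19)
    (by norm_num : (2:ℝ)^19 < 3^12)
  rw [Real.log_pow, Real.log_pow] at h
  push_cast at h
  linarith

private lemma depol_herm :
    (Matrix.diagonal ![3/2, 3/4, 3/4] : Matrix (Fin 3) (Fin 3) ℂ).IsHermitian := by
  have hv : star ![(3/2 : ℂ), 3/4, 3/4] = ![3/2, 3/4, 3/4] := by
    ext i
    fin_cases i <;> simp [Pi.star_apply]
  rw [Matrix.IsHermitian, Matrix.diagonal_conjTranspose, hv]

private lemma depol_spec :
    spectrum ℝ (Matrix.diagonal ![3/2, 3/4, 3/4] : Matrix (Fin 3) (Fin 3) ℂ)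
      ⊆ {3/2, 3/4} := by
  intro x hx
  by_contra h
  simp only [Set.mem_insert_iff, Set.mem_singleton_iff, not_or] at h
  rw [spectrum.mem_iff] at hx
  apply hx
  rw [Matrix.algebraMap_eq_diagonal, Matrix.diagonal_sub, Matrix.isUnit_iff_isUnit_det,
    Matrix.det_diagonal, Fin.prod_univ_three]
  simp only [Pi.sub_apply, Pi.algebraMap_apply]
  apply IsUnit.mul
  apply IsUnit.mul
  all_goals
    rw [isUnit_iff_ne_zero, sub_ne_zero]
    simp only [Matrix.cons_val_zero, Matrix.cons_val_one, Matrix.head_cons,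
      Matrix.cons_val_two, Matrix.tail_cons]
    rw [Complex.coe_algebraMap, ne_eq]
  · rw [show ((3:ℂ)/2) = ((3/2:ℝ):ℂ) by push_cast; ring, Complex.ofReal_inj]
    exact h.1
  · rw [show ((3:ℂ)/4) = ((3/4:ℝ):ℂ) by push_cast; ring, Complex.ofReal_inj]
    exact h.2
  · rw [show ((3:ℂ)/4) = ((3/4:ℝ):ℂ) by push_cast; ring, Complex.ofReal_inj]
    exact h.2

private lemma depol_log_one : cfc Real.log (1 : Matrix (Fin 3) (Fin 3) ℂ) = 0 := by
  have h1 : cfc Real.log (1 : Matrix (Fin 3) (Fin 3) ℂ) = cfc (fun _ : ℝ => (0:ℝ)) 1 := by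
    apply cfc_congr
    intro x hx
    rw [spectrum.one_eq] at hx
    simp only [Set.mem_singleton_iff] at hx
    subst hx
    simp [Real.log_one]
  rw [h1, cfc_const 0 1, map_zero]

private lemma depol_log_rho :
    cfc Real.log (Matrix.diagonal ![3/2, 3/4, 3/4] : Matrix (Fin 3) (Fin 3) ℂ)
      = depolA • (Matrix.diagonal ![3/2, 3/4, 3/4] : Matrix (Fin 3) (Fin 3) ℂ)
        + depolB • 1 := by
  set D : Matrix (Fin 3) (Fin 3) ℂ := Matrix.diagonal ![3/2, 3/4, 3/4] with hD
  have hρ : D.IsHermitian := depol_herm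
  have h1 : cfc Real.log D = cfc (fun x : ℝ => depolA * x + depolB) D := by
    apply cfc_congr
    intro x hx
    rcases depol_spec hx with h | h
    · subst h
      rw [Real.log_div (by norm_num) (by norm_num)]
      unfold depolA depolB; ring
    · simp only [Set.mem_singleton_iff] at h
      subst h
      rw [Real.log_div (by norm_num) (by norm_num),
        show (4:ℝ) = 2^2 by norm_num, Real.log_pow]
      unfold depolA depolB; push_cast; ring
  rw [h1]
  exact (cfc_add_const depolB (fun x : ℝ => depolA * x) D (by fun_prop) hρ).trans
    (by rw [cfc_const_mul_id depolA D hρ, Algebra.algebraMap_eq_smul_one])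

theorem depolarizing_M3_counterexample :
    ∀ ρ : Matrix (Fin 3) (Fin 3) ℂ,
      ρ = Matrix.diagonal ![3/2, 3/4, 3/4] →
      (((1 : Matrix (Fin 3) (Fin 3) ℂ) * cfc Real.log (1 : Matrix (Fin 3) (Fin 3) ℂ)
          - 1 * cfc Real.log ρ).trace / 3 <
        (ρ * cfc Real.log ρ - ρ * cfc Real.log (1 : Matrix (Fin 3) (Fin 3) ℂ)).trace / 3) ∧
      ((1 / 3 : ℝ) * Real.log (32 / 27) < (1 / 2 : ℝ) * Real.log (9 / 8)) ∧
      (((ρ - 1) * cfc Real.log ρ).trace / 3 =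
        (ρ * cfc Real.log ρ - ρ * cfc Real.log (1 : Matrix (Fin 3) (Fin 3) ℂ)).trace / 3
        + ((1 : Matrix (Fin 3) (Fin 3) ℂ) * cfc Real.log (1 : Matrix (Fin 3) (Fin 3) ℂ)
            - 1 * cfc Real.log ρ).trace / 3) ∧
      (((ρ - 1) * cfc Real.log ρ).trace / 3 <
        2 * ((ρ * cfc Real.log ρ
          - ρ * cfc Real.log (1 : Matrix (Fin 3) (Fin 3) ℂ)).trace / 3)) := by
  intro ρ hρeq
  subst hρeq
  set D : Matrix (Fin 3) (Fin 3) ℂ := Matrix.diagonal ![3/2, 3/4, 3/4] with hD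
  set a : ℝ := depolA with haa
  set b : ℝ := depolB with hbb
  have hone : cfc Real.log (1 : Matrix (Fin 3) (Fin 3) ℂ) = 0 := depol_log_one
  have hL : cfc Real.log D = a • D + b • 1 := depol_log_rho
  have htr : D.trace = 3 := by
    rw [hD, Matrix.trace_diagonal, Fin.sum_univ_three]
    norm_num [Matrix.cons_val_two, Matrix.tail_cons, Matrix.head_cons]
  have htr2 : (D * D).trace = 27/8 := by
    rw [hD, Matrix.diagonal_mul_diagonal, Matrix.trace_diagonal, Fin.sum_univ_three]
    norm_num [Matrix.cons_val_two, Matrix.tail_cons, Matrix.head_cons]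
  have hLtr : (cfc Real.log D).trace = ((3*a + 3*b : ℝ) : ℂ) := by
    rw [hL, Matrix.trace_add, Matrix.trace_smul, Matrix.trace_smul, htr, Matrix.trace_one]
    push_cast
    simp [Complex.real_smul]
    ring
  have hρLtr : (D * cfc Real.log D).trace = ((27/8*a + 3*b : ℝ) : ℂ) := by
    rw [hL, mul_add, Matrix.mul_smul, Matrix.mul_smul, mul_one, Matrix.trace_add,
      Matrix.trace_smul, Matrix.trace_smul, htr, htr2]
    push_cast
    simp [Complex.real_smul]
    ring
  have e1 : ((1 : Matrix (Fin 3) (Fin 3) ℂ) * cfc Real.log (1 : Matrix (Fin 3) (Fin 3) ℂ)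
      - 1 * cfc Real.log D).trace / 3 = ((-(3*a + 3*b)/3 : ℝ) : ℂ) := by
    rw [hone, mul_zero, one_mul, zero_sub, Matrix.trace_neg, hLtr]
    push_cast
    ring
  have e2 : (D * cfc Real.log D - D * cfc Real.log (1 : Matrix (Fin 3) (Fin 3) ℂ)).trace / 3
      = (((27/8*a + 3*b)/3 : ℝ) : ℂ) := by
    rw [hone, mul_zero, sub_zero, hρLtr]
    push_cast
    ring
  have e3 : ((D - 1) * cfc Real.log D).trace / 3
      = (((27/8*a + 3*b - (3*a + 3*b))/3 : ℝ) : ℂ) := by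
    rw [sub_mul, one_mul, Matrix.trace_sub, hρLtr, hLtr]
    push_cast
    ring
  have key := depol_key
  have hab : 0 < 17/8 * a + 2 * b := by
    rw [haa, hbb]; unfold depolA depolB; linarith
  refine ⟨?_, ?_, ?_, ?_⟩
  · rw [e1, e2]
    exact Complex.real_lt_real.mpr (by linarith)
  · rw [show (32/27 : ℝ) = 2^5 / 3^3 by norm_num,
      show (9/8 : ℝ) = 3^2 / 2^3 by norm_num,
      Real.log_div (by positivity) (by positivity),
      Real.log_div (by positivity) (by positivity),
      Real.log_pow, Real.log_pow, Real.log_pow, Real.log_pow]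
    push_cast
    linarith
  · rw [e1, e2, e3]
    push_cast
    ring
  · rw [e2, e3, show (2:ℂ) * (((27/8*a + 3*b)/3 : ℝ) : ℂ) = ((2*((27/8*a + 3*b)/3) : ℝ) : ℂ) by
      push_cast; ring]
    exact Complex.real_lt_real.mpr (by linarith)
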